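/- For any irreducible e ∈ ℤ², the set Anc(e) of ancestors of e satisfies #Anc(e) ≤ ‖e‖_∞ + 2, where ‖(α,β)‖_∞ = max{|α|,|β|}. -/

import Mathlib

/-- Vectors of `ℤ²`. -/
abbrev V : Type := ℤ × ℤ

/-- Determinant of two vectors of `ℤ²`. -/
def det2 (f g : V) : ℤ := f.1 * g.2 - f.2 * g.1

/-- Standard inner product on `ℤ²`. -/
def dot (f g : V) : ℤ := f.1 * g.1 + f.2 * g.2

/-- Squared euclidean norm on `ℤ²`. -/
def nsq (e : V) : ℤ := e.1 ^ 2 + e.2 ^ 2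

/-- A vector of `ℤ²` is irreducible iff its coordinates are coprime. -/
def Irred (e : V) : Prop := Int.gcd e.1 e.2 = 1

/-- `(f, g)` are the parents of `e` : they form a direct acute basis summing to `e`. -/
def IsParents (f g e : V) : Prop := e = f + g ∧ det2 f g = 1 ∧ 0 ≤ dot f g

/-- `f` is a parent of `e`. -/
def IsParent (f e : V) : Prop := ∃ g : V, IsParents f g e ∨ IsParents g f e

/-- Embedding of `ℤ²` into `ℝ²`. -/
def toR (e : V) : ℝ × ℝ := ((e.1 : ℝ), (e.2 : ℝ))


/-- The ancestor relation : `Anc e a` holds iff `a` belongs to the smallest set containing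
`e` and the parents of any of its elements of norm larger than one. -/
inductive Anc : V → V → Prop
  | refl (e : V) : Anc e e
  | left (e a f g : V) : Anc e a → 1 < nsq a → IsParents f g a → Anc e f
  | right (e a f g : V) : Anc e a → 1 < nsq a → IsParents f g a → Anc e g


lemma nsq_nonneg (v : V) : 0 ≤ nsq v := by unfold nsq; positivity

lemma lagrange (f g : V) : (dot f g)^2 + (det2 f g)^2 = nsq f * nsq g := by
  simp only [dot, det2, nsq]; ring

lemma nsq_pos_of_det {f g : V} (hd : det2 f g = 1) : 1 ≤ nsq f ∧ 1 ≤ nsq g := by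
  have hL := lagrange f g
  rw [hd] at hL
  have h1 := nsq_nonneg f
  have h2 := nsq_nonneg g
  have h3 := sq_nonneg (dot f g)
  constructor <;> nlinarith

lemma dot_ge_right {f g : V} (hd : det2 f g = 1) (hdot : 0 ≤ dot f g)
    (hlt : nsq g < nsq f) : nsq g ≤ dot f g := by
  have hL := lagrange f g
  rw [hd] at hL
  have h2 := nsq_nonneg g
  nlinarith [sq_nonneg (dot f g - nsq g), sq_nonneg (dot f g + nsq g)]

lemma dot_ge_left {f g : V} (hd : det2 f g = 1) (hdot : 0 ≤ dot f g)
    (hlt : nsq f < nsq g) : nsq f ≤ dot f g := by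
  have hL := lagrange f g
  rw [hd] at hL
  have h2 := nsq_nonneg f
  nlinarith [sq_nonneg (dot f g - nsq f), sq_nonneg (dot f g + nsq f)]

lemma eq_one_of_eq_nsq {f g : V} (hd : det2 f g = 1) (hdot : 0 ≤ dot f g)
    (heq : nsq f = nsq g) : nsq f = 1 := by
  have hL := lagrange f g
  rw [hd, ← heq] at hL
  have h1 := (nsq_pos_of_det hd).1
  have hDP : dot f g < nsq f := by nlinarith
  have hD1 : dot f g ≤ nsq f - 1 := by linarith
  nlinarith


/-- Core integer lemma for the sup-norm growth, assuming `0 ≤ a` and `a = max`. -/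
lemma L1helper {a b c d : ℤ} (hd : a*d - b*c = 1 ∨ a*d - b*c = -1)
    (hdot : 0 ≤ a*c + b*d) (hg : 1 ≤ c^2 + d^2) (hlt : c^2+d^2 < a^2+b^2)
    (hb : -a ≤ b ∧ b ≤ a) (h1 : -a ≤ a+c ∧ a+c ≤ a) (h2 : -a ≤ b+d ∧ b+d ≤ a) : False := by
  obtain ⟨hb1, hb2⟩ := hb
  obtain ⟨h11, h12⟩ := h1
  obtain ⟨h21, h22⟩ := h2
  have ha : 1 ≤ a := by nlinarith
  have hc : c ≤ 0 := by linarith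
  rcases eq_or_lt_of_le hc with hc0 | hcneg
  · -- c = 0
    subst hc0
    rcases hd with h | h
    · have had : a * d = 1 := by linear_combination h
      have ha1 : a = 1 := Int.eq_one_of_mul_eq_one_right (by linarith) had
      have hdd : d = 1 := by rw [ha1] at had; linarith
      subst ha1; subst hdd; nlinarith
    · have had : a * (-d) = 1 := by linear_combination -h
      have ha1 : a = 1 := Int.eq_one_of_mul_eq_one_right (by linarith) had
      have hdd : d = -1 := by rw [ha1] at had; linarith
      subst ha1; subst hdd; nlinarith
  · -- c < 0
    have hbd : 1 ≤ b * d := by nlinarith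
    rcases lt_trichotomy b 0 with hbneg | hb0 | hbpos
    · have hdneg : d < 0 := by nlinarith
      rcases hd with h | h <;> nlinarith
    · rw [hb0] at hbd; simp at hbd
    · have hdpos : 0 < d := by nlinarith
      rcases hd with h | h <;> nlinarith

lemma L1h2 {a b c d : ℤ} (hd : a*d - b*c = 1 ∨ a*d - b*c = -1)
    (hdot : 0 ≤ a*c + b*d) (hg : 1 ≤ c^2 + d^2) (hlt : c^2+d^2 < a^2+b^2)
    (hb : |b| ≤ |a|) (h1 : |a+c| ≤ |a|) (h2 : |b+d| ≤ |a|) : False := by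
  rcases le_or_gt 0 a with ha | ha
  · rw [abs_of_nonneg ha] at hb h1 h2
    rw [abs_le] at hb h1 h2
    exact L1helper hd hdot hg hlt hb h1 h2
  · rw [abs_of_neg ha] at hb h1 h2
    rw [abs_le] at hb h1 h2
    refine L1helper (a := -a) (b := -b) (c := -c) (d := -d) ?_ ?_ ?_ ?_ ?_ ?_ ?_
    · rcases hd with h | h
      · left; linear_combination h
      · right; linear_combination h
    · linarith [hdot]  -- (-a)(-c)+(-b)(-d) = ac+bd
    · nlinarith [hg]
    · nlinarith [hlt]
    · constructor <;> linarith [hb.1, hb.2]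
    · constructor <;> linarith [h1.1, h1.2]
    · constructor <;> linarith [h2.1, h2.2]

lemma supGrow {f g : V} (hd : det2 f g = 1 ∨ det2 f g = -1) (hdot : 0 ≤ dot f g)
    (hlt : nsq g < nsq f) :
    max |f.1| |f.2| < max |(f+g).1| |(f+g).2| := by
  have hg : 1 ≤ nsq g := by
    rcases hd with h | h
    · have := lagrange f g; rw [h] at this
      nlinarith [nsq_nonneg f, nsq_nonneg g, sq_nonneg (dot f g)]
    · have := lagrange f g; rw [h] at this
      nlinarith [nsq_nonneg f, nsq_nonneg g, sq_nonneg (dot f g)]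
  by_contra hcon
  push_neg at hcon
  simp only [Prod.fst_add, Prod.snd_add] at hcon
  have h1 : |f.1 + g.1| ≤ max |f.1| |f.2| := le_trans (le_max_left _ _) hcon
  have h2 : |f.2 + g.2| ≤ max |f.1| |f.2| := le_trans (le_max_right _ _) hcon
  simp only [det2, dot, nsq] at hd hdot hlt hg
  rcases le_total |f.2| |f.1| with hm | hm
  · rw [max_eq_left hm] at h1 h2
    exact L1h2 hd hdot hg hlt hm h1 h2
  · rw [max_eq_right hm] at h1 h2
    refine L1h2 (a := f.2) (b := f.1) (c := g.2) (d := g.1) ?_ ?_ ?_ ?_ hm ?_ ?_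
    · rcases hd with h | h
      · right; linear_combination -h
      · left; linear_combination -h
    · linarith [hdot]
    · linarith [hg]
    · linarith [hlt]
    · exact h2
    · exact h1

lemma parents_unique {e f g f' g' : V} (he : Irred e) (hN : 0 < nsq e)
    (hp : IsParents f g e) (hp' : IsParents f' g' e) : f = f' ∧ g = g' := by
  obtain ⟨hs, hd, hdot⟩ := hp
  obtain ⟨hs', hd', hdot'⟩ := hp'
  obtain ⟨a, b⟩ := f
  obtain ⟨c, d⟩ := g
  obtain ⟨a', b'⟩ := f'
  obtain ⟨c', d'⟩ := g'
  obtain ⟨p, q⟩ := e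
  simp only [Prod.mk_add_mk, Prod.mk.injEq] at hs hs'
  obtain ⟨hs1, hs2⟩ := hs
  obtain ⟨hs1', hs2'⟩ := hs'
  simp only [det2, dot, nsq, Irred] at hd hdot hd' hdot' hN he
  have hB : p * Int.gcdA p q + q * Int.gcdB p q = 1 := by
    have := Int.gcd_eq_gcd_ab p q
    rw [he] at this; push_cast at this; linarith
  have hfe : a * q - b * p = 1 := by rw [hs1, hs2]; linear_combination hd
  have hfe' : a' * q - b' * p = 1 := by rw [hs1', hs2']; linear_combination hd'
  have hge : c * q - d * p = -1 := by rw [hs1, hs2]; linear_combination -hd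
  have hcross : (a' - a) * q - (b' - b) * p = 0 := by linarith
  obtain ⟨t, ht1, ht2⟩ : ∃ t : ℤ, a' - a = t * p ∧ b' - b = t * q := by
    refine ⟨(a' - a) * Int.gcdA p q + (b' - b) * Int.gcdB p q, ?_, ?_⟩
    · linear_combination -(a' - a) * hB + Int.gcdB p q * hcross
    · linear_combination -(b' - b) * hB - Int.gcdA p q * hcross
  have hprod : (a*p+b*q) * (c*p+d*q) = (a*c + b*d) * (p^2+q^2) + 1 := by
    linear_combination (d*p - c*q) * hfe - hge
  have huv : (a*p+b*q) + (c*p+d*q) = p^2+q^2 := by rw [hs1, hs2]; ring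
  have hDN : 0 ≤ (a*c + b*d) * (p^2+q^2) := mul_nonneg hdot (le_of_lt hN)
  have hu1 : 1 ≤ a * p + b * q := by
    by_contra hcon; push_neg at hcon
    have hu0 : a * p + b * q ≤ 0 := by linarith
    have hv0 : 0 < c * p + d * q := by linarith
    nlinarith [mul_nonpos_iff.mpr (Or.inr ⟨hu0, le_of_lt hv0⟩)]
  have hv1 : 1 ≤ c * p + d * q := by
    by_contra hcon; push_neg at hcon
    have hv0 : c * p + d * q ≤ 0 := by linarith
    have hu0 : (0:ℤ) < a * p + b * q := by linarith
    nlinarith [mul_nonpos_iff.mpr (Or.inl ⟨le_of_lt hu0, hv0⟩)]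
  have ha' : a' = a + t * p := by linarith
  have hb' : b' = b + t * q := by linarith
  have hc' : c' = c - t * p := by
    have h := hs1.symm.trans hs1'; linarith
  have hd2 : d' = d - t * q := by
    have h := hs2.symm.trans hs2'; linarith
  have hkey : (p^2+q^2) * (a'*c' + b'*d') =
      -((t*(p^2+q^2) + (a*p+b*q)) * (t*(p^2+q^2) - (c*p+d*q))) - 1 := by
    rw [ha', hb', hc', hd2]
    linear_combination (c*q - d*p) * hfe + hge
  have ht0 : t = 0 := by
    rcases lt_trichotomy t 0 with h | h | h
    · exfalso
      have hm : 0 ≤ (-(t+1)) * (p^2+q^2) :=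
        mul_nonneg (by linarith) (le_of_lt hN)
      have h2 : t*(p^2+q^2) + (a*p+b*q) ≤ -1 := by linarith only [hm, huv, hv1, h]
      have h3 : t*(p^2+q^2) - (c*p+d*q) ≤ -1 := by linarith only [hm, hv1, hN]
      have h4 : (1:ℤ) * 1 ≤ (-(t*(p^2+q^2) + (a*p+b*q))) * (-(t*(p^2+q^2) - (c*p+d*q))) :=
        mul_le_mul (by linarith only [h2]) (by linarith only [h3]) (by norm_num)
          (by linarith only [h2])
      have h5 : 0 ≤ (p^2+q^2) * (a'*c' + b'*d') := mul_nonneg (le_of_lt hN) hdot'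
      linarith only [hkey, h4, h5]
    · exact h
    · exfalso
      have hm : 0 ≤ (t-1) * (p^2+q^2) :=
        mul_nonneg (by linarith) (le_of_lt hN)
      have h2 : 1 ≤ t*(p^2+q^2) + (a*p+b*q) := by linarith only [hm, hu1, hN]
      have h3 : 1 ≤ t*(p^2+q^2) - (c*p+d*q) := by linarith only [hm, huv, hu1]
      have h4 : (1:ℤ) * 1 ≤ (t*(p^2+q^2) + (a*p+b*q)) * (t*(p^2+q^2) - (c*p+d*q)) :=
        mul_le_mul h2 h3 (by norm_num) (by linarith only [h2])
      have h5 : 0 ≤ (p^2+q^2) * (a'*c' + b'*d') := mul_nonneg (le_of_lt hN) hdot'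
      linarith only [hkey, h4, h5]
  rw [ht0] at ha' hb' hc' hd2
  simp only [zero_mul, add_zero, sub_zero] at ha' hb' hc' hd2
  exact ⟨by simp [ha', hb'], by simp [hc', hd2]⟩

/-- Custom recursion principle for `Anc` with fixed source. -/
lemma anc_rec' {e : V} (P : V → Prop) (h0 : P e)
    (hstep : ∀ a f g, Anc e a → P a → 1 < nsq a → IsParents f g a → P f ∧ P g) :
    ∀ a, Anc e a → P a := by
  have main : ∀ x a, Anc x a → x = e → P a := by
    intro x a h
    induction h with
    | refl => intro hx; rw [hx]; exact h0
    | left a f g h h1 hp ih =>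
        intro hx; subst hx
        exact (hstep a f g h (ih rfl) h1 hp).1
    | right a f g h h1 hp ih =>
        intro hx; subst hx
        exact (hstep a f g h (ih rfl) h1 hp).2
  intro a h
  exact main e a h rfl

lemma anc_trans {b f a : V} (h1 : Anc b f) (h2 : Anc f a) : Anc b a := by
  induction h2 with
  | refl => exact h1
  | left a f g h hn hp ih => exact Anc.left b a f g ih hn hp
  | right a f g h hn hp ih => exact Anc.right b a f g ih hn hp

lemma irred_of_det {f g : V} (hd : det2 f g = 1) : Irred f := by
  have h1 : (Int.gcd f.1 f.2 : ℤ) ∣ 1 := by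
    rw [← hd]
    exact dvd_sub (Dvd.dvd.mul_right (Int.gcd_dvd_left _ _) _)
      (Dvd.dvd.mul_right (Int.gcd_dvd_right _ _) _)
  have := Int.eq_one_of_dvd_one (by positivity) h1
  exact_mod_cast this

lemma anc_small {e : V} (hsmall : nsq e ≤ 1) : ∀ a, Anc e a → a = e := by
  apply anc_rec' (fun a => a = e) rfl
  intro a f g _ ha h1 _
  rw [ha] at h1; linarith

lemma anc_noparents {e : V} (hnp : ∀ f g, ¬ IsParents f g e) :
    ∀ a, Anc e a → a = e := by
  apply anc_rec' (fun a => a = e) rfl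
  intro a f g _ ha h1 hp
  rw [ha] at hp
  exact absurd hp (hnp f g)

lemma irred_of_det' {f g : V} (hd : det2 f g = 1) : Irred g := by
  have h1 : (Int.gcd g.1 g.2 : ℤ) ∣ 1 := by
    rw [← hd]
    exact dvd_sub (Dvd.dvd.mul_left (Int.gcd_dvd_right _ _) _)
      (Dvd.dvd.mul_left (Int.gcd_dvd_left _ _) _)
  have := Int.eq_one_of_dvd_one (by positivity) h1
  exact_mod_cast this

lemma anc_split {e f g b : V} (he : Irred e) (hN : 1 < nsq e)
    (hp : IsParents f g e) (hbf : Anc b f) (hbg : Anc b g) :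
    ∀ a, Anc e a → a = e ∨ Anc b a := by
  apply anc_rec' (fun a => a = e ∨ Anc b a) (Or.inl rfl)
  rintro a f' g' _ (rfl | hba) h1 hp'
  · obtain ⟨h1', h2'⟩ := parents_unique he (by linarith) hp' hp
    exact ⟨Or.inr (by rw [h1']; exact hbf), Or.inr (by rw [h2']; exact hbg)⟩
  · exact ⟨Or.inr (Anc.left b a f' g' hba h1 hp'),
      Or.inr (Anc.right b a f' g' hba h1 hp')⟩

lemma anc_three {e f g : V} (he : Irred e) (hN : 1 < nsq e) (hp : IsParents f g e)
    (hf : nsq f ≤ 1) (hg : nsq g ≤ 1) : ∀ a, Anc e a → a = e ∨ a = f ∨ a = g := by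
  apply anc_rec' (fun a => a = e ∨ a = f ∨ a = g) (Or.inl rfl)
  rintro a f' g' _ (rfl | rfl | rfl) h1 hp'
  · obtain ⟨h1', h2'⟩ := parents_unique he (by linarith) hp' hp
    exact ⟨Or.inr (Or.inl h1'), Or.inr (Or.inr h2')⟩
  · exact absurd h1 (not_lt.mpr hf)
  · exact absurd h1 (not_lt.mpr hg)

lemma parents_of_bigger {f g : V} (hd : det2 f g = 1) (hdot : 0 ≤ dot f g)
    (hlt : nsq g < nsq f) : IsParents (f - g) g f := by
  refine ⟨by ring, ?_, ?_⟩
  · simp only [det2, Prod.fst_sub, Prod.snd_sub]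
    simp only [det2] at hd
    linear_combination hd
  · have h := dot_ge_right hd hdot hlt
    simp only [dot, nsq, Prod.fst_sub, Prod.snd_sub] at h ⊢
    linarith

lemma parents_of_bigger' {f g : V} (hd : det2 f g = 1) (hdot : 0 ≤ dot f g)
    (hlt : nsq f < nsq g) : IsParents f (g - f) g := by
  refine ⟨by ring, ?_, ?_⟩
  · simp only [det2, Prod.fst_sub, Prod.snd_sub]
    simp only [det2] at hd
    linear_combination hd
  · have h := dot_ge_left hd hdot hlt
    simp only [dot, nsq, Prod.fst_sub, Prod.snd_sub] at h ⊢
    linarith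

lemma natAbs_max_cast (v : V) : ((max v.1.natAbs v.2.natAbs : ℕ) : ℤ) = max |v.1| |v.2| := by
  simp [Nat.cast_max, Int.natCast_natAbs]

/-- For any irreducible `e ∈ ℤ²`, `#Anc(e) ≤ ‖e‖_∞ + 2`. -/
theorem card_ancestors (e : V) (he : Irred e) :
    {a : V | Anc e a}.ncard ≤ max e.1.natAbs e.2.natAbs + 2 := by
  suffices h : ∀ n : ℕ, ∀ e : V, nsq e ≤ (n : ℤ) → Irred e →
      {a : V | Anc e a}.Finite ∧
      {a : V | Anc e a}.ncard ≤ max e.1.natAbs e.2.natAbs + 2 by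
    refine (h (nsq e).toNat e ?_ he).2
    exact le_of_eq (Int.toNat_of_nonneg (nsq_nonneg e)).symm
  intro n
  induction n using Nat.strong_induction_on with
  | _ n IH =>
  intro e hn he
  by_cases h1 : nsq e ≤ 1
  · have hsub : {a : V | Anc e a} ⊆ {e} := fun a ha => anc_small h1 a ha
    refine ⟨(Set.finite_singleton e).subset hsub, ?_⟩
    have h2 := Set.ncard_le_ncard hsub (Set.finite_singleton e)
    rw [Set.ncard_singleton] at h2
    omega
  push_neg at h1
  by_cases hex : ∃ f g, IsParents f g e
  case neg =>
    push_neg at hex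
    have hsub : {a : V | Anc e a} ⊆ {e} := fun a ha =>
      anc_noparents (fun f g h => hex f g h) a ha
    refine ⟨(Set.finite_singleton e).subset hsub, ?_⟩
    have h2 := Set.ncard_le_ncard hsub (Set.finite_singleton e)
    rw [Set.ncard_singleton] at h2
    omega
  obtain ⟨f, g, hp⟩ := hex
  have hs := hp.1
  have hd := hp.2.1
  have hdot := hp.2.2
  have hIf : Irred f := irred_of_det hd
  have hIg : Irred g := irred_of_det' hd
  have hf1 : 1 ≤ nsq f := (nsq_pos_of_det hd).1
  have hg1 : 1 ≤ nsq g := (nsq_pos_of_det hd).2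
  have hsum : nsq e = nsq f + 2 * dot f g + nsq g := by
    rw [hs]; simp only [nsq, dot, Prod.fst_add, Prod.snd_add]; ring
  have hfe : nsq f < nsq e := by linarith
  have hge : nsq g < nsq e := by linarith
  have hn2 : 2 ≤ n := by
    have : (2 : ℤ) ≤ (n : ℤ) := by linarith
    exact_mod_cast this
  have hcast : ((n - 1 : ℕ) : ℤ) = (n : ℤ) - 1 := by
    push_cast [Nat.cast_sub (by omega : 1 ≤ n)]; ring
  rcases lt_trichotomy (nsq f) (nsq g) with hlt | heq | hlt
  · -- g is the bigger parent
    have hg2 : 1 < nsq g := by linarith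
    have hP2 := parents_of_bigger' hd hdot hlt
    have hAgf : Anc g f := Anc.left g g f (g - f) (Anc.refl g) hg2 hP2
    have hsub : {a : V | Anc e a} ⊆ insert e {a : V | Anc g a} := by
      intro a ha
      rcases anc_split he h1 hp hAgf (Anc.refl g) a ha with h | h
      · exact Set.mem_insert_iff.mpr (Or.inl h)
      · exact Set.mem_insert_iff.mpr (Or.inr h)
    obtain ⟨hF, hC⟩ := IH (n - 1) (by omega) g (by rw [hcast]; linarith) hIg
    refine ⟨(hF.insert e).subset hsub, ?_⟩
    have hM : max g.1.natAbs g.2.natAbs < max e.1.natAbs e.2.natAbs := by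
      have hdg : det2 g f = -1 := by
        simp only [det2] at hd ⊢; linear_combination -hd
      have hdotg : 0 ≤ dot g f := by
        simp only [dot] at hdot ⊢; linarith
      have h := supGrow (Or.inr hdg) hdotg hlt
      rw [add_comm, ← hs] at h
      have c1 := natAbs_max_cast g
      have c2 := natAbs_max_cast e
      have : ((max g.1.natAbs g.2.natAbs : ℕ) : ℤ) < ((max e.1.natAbs e.2.natAbs : ℕ) : ℤ) := by
        rw [c1, c2]; exact h
      exact_mod_cast this
    have hc1 : {a : V | Anc e a}.ncard ≤ (insert e {a : V | Anc g a}).ncard :=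
      Set.ncard_le_ncard hsub (hF.insert e)
    have hc2 := Set.ncard_insert_le e {a : V | Anc g a}
    omega
  · -- equal norms : both parents are unit vectors
    have hone : nsq f = 1 := eq_one_of_eq_nsq hd hdot heq
    have hsub : {a : V | Anc e a} ⊆ {e, f, g} := by
      intro a ha
      rcases anc_three he h1 hp (le_of_eq hone) (le_of_eq (heq ▸ hone)) a ha with h | h | h <;>
        simp [h]
    have hfin : ({e, f, g} : Set V).Finite :=
      (Set.finite_singleton g).insert f |>.insert e
    refine ⟨hfin.subset hsub, ?_⟩
    have hc1 : {a : V | Anc e a}.ncard ≤ ({e, f, g} : Set V).ncard :=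
      Set.ncard_le_ncard hsub hfin
    have hc2 := Set.ncard_insert_le e ({f, g} : Set V)
    have hc3 := Set.ncard_insert_le f ({g} : Set V)
    rw [Set.ncard_singleton] at hc3
    have hM1 : 1 ≤ max e.1.natAbs e.2.natAbs := by
      by_contra hM
      push_neg at hM
      have he1 : e.1 = 0 := Int.natAbs_eq_zero.mp (by omega)
      have he2 : e.2 = 0 := Int.natAbs_eq_zero.mp (by omega)
      rw [nsq, he1, he2] at h1
      norm_num at h1
    omega
  · -- f is the bigger parent
    have hf2 : 1 < nsq f := by linarith
    have hP2 := parents_of_bigger hd hdot hlt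
    have hAfg : Anc f g := Anc.right f f (f - g) g (Anc.refl f) hf2 hP2
    have hsub : {a : V | Anc e a} ⊆ insert e {a : V | Anc f a} := by
      intro a ha
      rcases anc_split he h1 hp (Anc.refl f) hAfg a ha with h | h
      · exact Set.mem_insert_iff.mpr (Or.inl h)
      · exact Set.mem_insert_iff.mpr (Or.inr h)
    obtain ⟨hF, hC⟩ := IH (n - 1) (by omega) f (by rw [hcast]; linarith) hIf
    refine ⟨(hF.insert e).subset hsub, ?_⟩
    have hM : max f.1.natAbs f.2.natAbs < max e.1.natAbs e.2.natAbs := by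
      have h := supGrow (Or.inl hd) hdot hlt
      rw [← hs] at h
      have c1 := natAbs_max_cast f
      have c2 := natAbs_max_cast e
      have : ((max f.1.natAbs f.2.natAbs : ℕ) : ℤ) < ((max e.1.natAbs e.2.natAbs : ℕ) : ℤ) := by
        rw [c1, c2]; exact h
      exact_mod_cast this
    have hc1 : {a : V | Anc e a}.ncard ≤ (insert e {a : V | Anc f a}).ncard :=
      Set.ncard_le_ncard hsub (hF.insert e)
    have hc2 := Set.ncard_insert_le e {a : V | Anc f a}
    omega
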